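/- arXiv:2511.12736 — 2 statements merged into one kernel-verified Lean document; each statement's English description precedes it below -/
import Mathlib

section
/- Let T be a nonspecial ω₁-tree. Then ◊* implies ◊_T*. -/
open Set

/-- The first uncountable ordinal `ω₁`. -/
noncomputable def omega1 : Ordinal := Ordinal.omega 1

section TreeDefs

variable {T : Type*} [PartialOrder T]

/-- In a tree, the set of strict predecessors of any node is linearly ordered. -/
def PredsChain (T : Type*) [PartialOrder T] : Prop :=
  ∀ t : T, IsChain (· ≤ ·) {s : T | s < t}

/-- `ht` is *the* height function of the tree: it is strictly monotone on comparable pairs and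
the heights of the strict predecessors of `t` are exactly the ordinals below `ht t`; together
with `PredsChain` this says that the set `t↓` of strict predecessors of `t` is well-ordered
with order type `ht t`. -/
def IsHeightFun (ht : T → Ordinal) : Prop :=
  (∀ s t : T, s < t → ht s < ht t) ∧
  ∀ t : T, ∀ o : Ordinal, o < ht t → ∃ s : T, s < t ∧ ht s = o

/-- The tree has height `ω₁`: every node has height `< ω₁` and every countable ordinal is the
height of some node. -/
def HeightOmega1 (ht : T → Ordinal) : Prop :=
  (∀ t : T, ht t < omega1) ∧ ∀ o : Ordinal, o < omega1 → ∃ t : T, ht t = o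

/-- All levels of the tree are countable. -/
def CountableLevels (ht : T → Ordinal) : Prop :=
  ∀ o : Ordinal, {t : T | ht t = o}.Countable

/-- A tree of height `ω₁` is well-pruned if every node has successors in all later levels. -/
def WellPruned (ht : T → Ordinal) : Prop :=
  ∀ o o' : Ordinal, o < o' → o' < omega1 →
    ∀ s : T, ht s = o → ∃ t : T, s < t ∧ ht t = o'

/-- A special subset of a tree: a union of countably many antichains. -/
def IsSpecialSet (U : Set T) : Prop :=
  ∃ A : ℕ → Set T, (∀ n : ℕ, IsAntichain (· ≤ ·) (A n)) ∧ U ⊆ ⋃ n, A n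

/-- Membership in the ideal `NS^T`: there is a regressive map on `B` all of whose fibers
are special. -/
def InNS [OrderBot T] (B : Set T) : Prop :=
  ∃ f : T → T, (∀ t ∈ B, t ≠ ⊥ → f t < t) ∧
    ∀ t : T, IsSpecialSet {s : T | s ∈ B ∧ f s = t}

/-- The diamond principle `◊_T` for a tree `T`. -/
def DiamondTree (T : Type*) [PartialOrder T] [OrderBot T] : Prop :=
  ∃ D : T → Set T, (∀ t : T, D t ⊆ Set.Iio t) ∧
    ∀ X : Set T, ¬ InNS {t : T | X ∩ Set.Iio t = D t}

end TreeDefs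

/-- Club subsets of `ω₁`: closed and unbounded in `ω₁`. -/
def IsClubIn (C : Set Ordinal) : Prop :=
  C ⊆ Set.Iio omega1 ∧
  (∀ o : Ordinal, o < omega1 → ∃ b ∈ C, o < b) ∧
  ∀ o : Ordinal, o < omega1 → (C ∩ Set.Iio o).Nonempty →
    IsLUB (C ∩ Set.Iio o) o → o ∈ C

/-- Stationary subsets of `ω₁`: sets meeting every club. -/
def IsStationaryIn (S : Set Ordinal) : Prop :=
  ∀ C : Set Ordinal, IsClubIn C → (S ∩ C).Nonempty

/-- The diamond principle `◊(S)` for `S ⊆ ω₁`;  `◊` is `DiamondOn (Set.Iio omega1)`. -/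
def DiamondOn (S : Set Ordinal) : Prop :=
  ∃ D : Ordinal → Set Ordinal, (∀ o ∈ S, D o ⊆ Set.Iio o) ∧
    ∀ X : Set Ordinal, X ⊆ Set.Iio omega1 →
      IsStationaryIn {o ∈ S | X ∩ Set.Iio o = D o}

/-- The principle `◊*`: a sequence of countable families `𝒟_α` of subsets of `α` such that
every `X ⊆ ω₁` satisfies `X ∩ α ∈ 𝒟_α` on a club of `α < ω₁`. -/
def DiamondStar : Prop :=
  ∃ D : Ordinal.{0} → Set (Set Ordinal.{0}),
    (∀ o : Ordinal, o < omega1 → (∀ A ∈ D o, A ⊆ Set.Iio o) ∧ (D o).Countable) ∧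
    ∀ X : Set Ordinal, X ⊆ Set.Iio omega1 →
      ∃ C : Set Ordinal, IsClubIn C ∧ ∀ o ∈ C, X ∩ Set.Iio o ∈ D o

/-- The principle `◊_T*`: each node carries a countable family `𝒟_t` of subsets of `t↓`, and
for every `X ⊆ T` the set of nodes where `X` is *not* guessed belongs to `NS^T`. -/
def DiamondTreeStar (T : Type*) [PartialOrder T] [OrderBot T] : Prop :=
  ∃ D : T → Set (Set T),
    (∀ t : T, (∀ A ∈ D t, A ⊆ Set.Iio t) ∧ (D t).Countable) ∧
    ∀ X : Set T, InNS {t : T | X ∩ Set.Iio t ∉ D t}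


section Helpers

open Cardinal

lemma omega1_eq_ord : omega1.{0} = (Cardinal.aleph 1).ord := (Cardinal.ord_aleph 1).symm

lemma omega1_pos : 0 < omega1.{0} := Ordinal.omega_pos 1

lemma countable_Iio_omega1 {o : Ordinal.{0}} (h : o < omega1) : (Set.Iio o).Countable := by
  rw [Cardinal.countable_iff_lt_aleph_one, Ordinal.mk_Iio_ordinal]
  have h1 : o.card < Cardinal.aleph 1 := Cardinal.lt_ord.1 (by rwa [omega1_eq_ord] at h)
  calc Cardinal.lift.{1} o.card < Cardinal.lift.{1} (Cardinal.aleph 1) := Cardinal.lift_lt.2 h1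
    _ = Cardinal.aleph 1 := by rw [Cardinal.lift_aleph, Ordinal.lift_one]

lemma csSup_lt_omega1 {S : Set Ordinal.{0}} (hS : S.Countable) (h : ∀ x ∈ S, x < omega1) :
    sSup S < omega1 := by
  rcases S.eq_empty_or_nonempty with rfl | hne
  · rw [csSup_empty]; exact omega1_pos
  · obtain ⟨f, rfl⟩ := hS.exists_eq_range hne
    rw [show sSup (Set.range f) = ⨆ n, f n from rfl, omega1_eq_ord]
    rw [← omega1_eq_ord]
    exact Ordinal.iSup_lt_omega_one
      (fun n => by exact h (f n) ⟨n, rfl⟩)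

lemma bddAbove_of_countable {S : Set Ordinal.{0}} (hS : S.Countable) : BddAbove S :=
  have : Countable ↥S := hS.to_subtype
  Ordinal.bddAbove_of_small (s := S)

lemma succ_lt_omega1 {o : Ordinal.{0}} (h : o < omega1) : o + 1 < omega1 := by
  rw [Ordinal.add_one_eq_succ]
  have hl : Order.IsSuccLimit omega1.{0} := Cardinal.isSuccLimit_omega 1
  exact hl.succ_lt h

lemma countable_Iic_omega1 {o : Ordinal.{0}} (h : o < omega1) : (Set.Iic o).Countable := by
  have : Set.Iic o = Set.Iio (o + 1) := by
    ext x
    simp only [Set.mem_Iic, Set.mem_Iio, Ordinal.add_one_eq_succ, Order.lt_succ_iff]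
  rw [this]; exact countable_Iio_omega1 (succ_lt_omega1 h)

lemma countable_isSpecial' {T : Type*} [PartialOrder T] {U : Set T} (hU : U.Countable) :
    IsSpecialSet U := by
  rcases U.eq_empty_or_nonempty with rfl | hne
  · exact ⟨fun _ => ∅, fun n => Set.pairwise_empty _, by simp⟩
  · obtain ⟨f, rfl⟩ := hU.exists_eq_range hne
    refine ⟨fun n => {f n}, fun n => Set.pairwise_singleton _ _, ?_⟩
    rintro x ⟨n, rfl⟩
    exact Set.mem_iUnion.2 ⟨n, rfl⟩

section Equivs
universe u

lemma exists_equiv_tree {T : Type u} (ht : T → Ordinal.{0})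
    (hΩ : HeightOmega1 ht) (hlev : CountableLevels ht) :
    Nonempty ((Set.Iio omega1.{0} : Set Ordinal) ≃ T) := by
  classical
  have mkA : #(Set.Iio omega1.{0} : Set Ordinal) = Cardinal.aleph 1 := by
    rw [Ordinal.mk_Iio_ordinal, omega1_eq_ord, Cardinal.card_ord, Cardinal.lift_aleph,
      Ordinal.lift_one]
  have he1 : Cardinal.lift.{u} #(Set.Iio omega1.{0} : Set Ordinal) ≤ Cardinal.lift.{1} #T := by
    choose F hF using fun ξ : (Set.Iio omega1.{0} : Set Ordinal) => hΩ.2 ξ.1 ξ.2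
    exact Cardinal.lift_mk_le'.2 ⟨⟨F, fun a b hab => Subtype.ext (by rw [← hF a, ← hF b, hab])⟩⟩
  have he2 : Cardinal.lift.{1} #T ≤ Cardinal.lift.{u} #(Set.Iio omega1.{0} : Set Ordinal) := by
    have hψ : ∀ o : Ordinal.{0}, ∃ f : T → ℕ, Set.InjOn f {u | ht u = o} :=
      fun o => Set.countable_iff_exists_injOn.1 (hlev o)
    choose ψ hψ using hψ
    have hemb : Cardinal.lift.{1} #T ≤
        Cardinal.lift.{u} #((Set.Iio omega1.{0} : Set Ordinal) × ULift.{1} ℕ) := by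
      refine Cardinal.lift_mk_le'.2 ⟨⟨fun t => (⟨ht t, hΩ.1 t⟩, ⟨ψ (ht t) t⟩), ?_⟩⟩
      intro a b hab
      have h1 : ht a = ht b := congrArg (fun p => (p.1 : Ordinal)) hab
      have h2 : ψ (ht a) a = ψ (ht b) b := congrArg (fun p => p.2.down) hab
      rw [← h1] at h2
      exact hψ (ht a) (by exact rfl) (by exact h1.symm) h2
    have hprod : #((Set.Iio omega1.{0} : Set Ordinal) × ULift.{1} ℕ) = Cardinal.aleph 1 := by
      rw [Cardinal.mk_prod, Cardinal.lift_id, Cardinal.lift_id, Cardinal.mk_uLift,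
        Cardinal.mk_nat, Cardinal.lift_aleph0, mkA, Cardinal.aleph_mul_aleph0]
    rwa [hprod, ← mkA] at hemb
  exact Cardinal.lift_mk_eq'.1 (le_antisymm he1 he2)

end Equivs

lemma club_refine (C : Set Ordinal.{0}) (hC : IsClubIn C) (g : Ordinal.{0} → Ordinal.{0})
    (hg : ∀ β < omega1.{0}, g β < omega1) :
    ∃ D : Set Ordinal.{0}, D ⊆ C ∧ D ⊆ Set.Iio omega1 ∧ (∀ α ∈ D, ∀ β < α, g β < α) ∧
      (∀ o < omega1.{0}, ∃ α ∈ D, o < α) ∧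
      ∀ γ < omega1.{0}, (D ∩ Set.Iio γ).Nonempty → sSup (D ∩ Set.Iio γ) = γ → γ ∈ D := by
  classical
  refine ⟨{α ∈ C | ∀ β < α, g β < α}, fun α h => h.1, fun α h => hC.1 h.1,
    fun α h => h.2, ?_, ?_⟩
  · -- unbounded
    intro o ho
    set G : Ordinal.{0} → Ordinal.{0} := fun x => sSup (g '' Set.Iic x) + 1 with hGdef
    have hG_lt : ∀ x < omega1.{0}, G x < omega1 := by
      intro x hx
      refine succ_lt_omega1 (csSup_lt_omega1 ((countable_Iic_omega1 hx).image g) ?_)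
      rintro y ⟨β, hβ, rfl⟩
      exact hg β (lt_of_le_of_lt hβ hx)
    have hG_g : ∀ β x, x < omega1.{0} → β ≤ x → g β < G x := by
      intro β x hx hβ
      have hb : BddAbove (g '' Set.Iic x) :=
        bddAbove_of_countable ((countable_Iic_omega1 hx).image g)
      calc g β ≤ sSup (g '' Set.Iic x) := le_csSup hb ⟨β, hβ, rfl⟩
        _ < sSup (g '' Set.Iic x) + 1 := by
            rw [Ordinal.add_one_eq_succ]; exact Order.lt_succ _
        _ = G x := rfl
    have key : ∀ x : {y : Ordinal.{0} // y ∈ C}, ∃ z : {y : Ordinal.{0} // y ∈ C},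
        max (G x.1) x.1 < z.1 := by
      intro x
      obtain ⟨y, hyC, hy⟩ := hC.2.1 (max (G x.1) x.1)
        (max_lt (hG_lt x.1 (hC.1 x.2)) (hC.1 x.2))
      exact ⟨⟨y, hyC⟩, hy⟩
    choose step hstep using key
    obtain ⟨y0, hy0C, hy0⟩ := hC.2.1 o ho
    set b : ℕ → {y : Ordinal.{0} // y ∈ C} := fun n => step^[n] ⟨y0, hy0C⟩ with hbdef
    have hb_succ : ∀ n, max (G (b n).1) (b n).1 < (b (n+1)).1 := by
      intro n
      have : b (n+1) = step (b n) := Function.iterate_succ_apply' step n _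
      rw [this]; exact hstep (b n)
    have hb_mono : ∀ n, (b n).1 < (b (n+1)).1 :=
      fun n => lt_of_le_of_lt (le_max_right _ _) (hb_succ n)
    have hb_lt : ∀ n, (b n).1 < omega1 := fun n => hC.1 (b n).2
    have hbdd : BddAbove (Set.range fun n => (b n).1) := Ordinal.bddAbove_range _
    set α := ⨆ n, (b n).1 with hαdef
    have hα_lt : α < omega1 := by
      rw [hαdef, omega1_eq_ord]
      rw [← omega1_eq_ord]
      exact Ordinal.iSup_lt_omega_one (fun n => by exact hb_lt n)
    have hbα : ∀ n, (b n).1 < α :=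
      fun n => lt_of_lt_of_le (hb_mono n) (le_ciSup hbdd (n+1))
    have hcl : ∀ β < α, g β < α := by
      intro β hβ
      obtain ⟨n, hn⟩ := (lt_ciSup_iff hbdd).1 hβ
      calc g β < G (b n).1 := hG_g β (b n).1 (hb_lt n) hn.le
        _ ≤ max (G (b n).1) (b n).1 := le_max_left _ _
        _ < (b (n+1)).1 := hb_succ n
        _ < α := hbα (n+1)
    have hαC : α ∈ C := by
      refine hC.2.2 α hα_lt ⟨(b 0).1, (b 0).2, hbα 0⟩ ⟨?_, ?_⟩
      · rintro x ⟨-, hx⟩; exact le_of_lt hx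
      · intro x hx
        exact ciSup_le fun n => hx ⟨(b n).2, hbα n⟩
    exact ⟨α, ⟨hαC, hcl⟩, lt_trans hy0 (hbα 0)⟩
  · -- closedness
    intro γ hγ hne hsup
    have hcl : ∀ β < γ, g β < γ := by
      intro β hβ
      rw [← hsup] at hβ
      obtain ⟨δ, ⟨hδD, hδγ⟩, hβδ⟩ := exists_lt_of_lt_csSup hne hβ
      exact lt_trans (hδD.2 β hβδ) hδγ
    have hγC : γ ∈ C := by
      obtain ⟨δ, hδD, hδγ⟩ := id hne
      refine hC.2.2 γ hγ ⟨δ, hδD.1, hδγ⟩ ⟨?_, ?_⟩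
      · rintro x ⟨-, hx⟩; exact le_of_lt hx
      · intro x hx
        rw [← hsup]
        exact csSup_le hne (fun d hd => hx ⟨hd.1.1, hd.2⟩)
    exact ⟨hγC, hcl⟩

end Helpers

lemma stmt14_aux {T : Type*} [PartialOrder T] [OrderBot T]
    (ht : T → Ordinal.{0})
    (hht : IsHeightFun ht) (hΩ : HeightOmega1 ht) (hlev : CountableLevels ht)
    (hstar : DiamondStar) :
    DiamondTreeStar T := by
  classical
  obtain ⟨e⟩ := exists_equiv_tree ht hΩ hlev
  obtain ⟨Ds, hDs, hguess⟩ := hstar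
  set idx : T → Ordinal.{0} := fun u => ((e.symm u) : (Set.Iio omega1 : Set Ordinal.{0})).1
    with hidxdef
  have hlevle : ∀ β < omega1.{0}, {u : T | ht u ≤ β}.Countable := by
    intro β hβ
    have hrw : {u : T | ht u ≤ β} = ⋃ o ∈ Set.Iic β, {u : T | ht u = o} := by
      ext u
      simp only [Set.mem_setOf_eq, Set.mem_iUnion, Set.mem_Iic, exists_prop]
      exact ⟨fun h => ⟨ht u, h, rfl⟩, fun ⟨o, ho, h⟩ => h ▸ ho⟩
    rw [hrw]
    exact (countable_Iic_omega1 hβ).biUnion (fun o _ => hlev o)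
  set g : Ordinal.{0} → Ordinal.{0} := fun β => sSup (idx '' {u : T | ht u ≤ β}) + 1 with hgdef
  have hg_lt : ∀ β < omega1.{0}, g β < omega1 := by
    intro β hβ
    refine succ_lt_omega1 (csSup_lt_omega1 ((hlevle β hβ).image idx) ?_)
    rintro y ⟨u, -, rfl⟩; exact (e.symm u).2
  have hg_idx : ∀ u : T, idx u < g (ht u) := by
    intro u
    have hb : BddAbove (idx '' {v : T | ht v ≤ ht u}) :=
      bddAbove_of_countable ((hlevle (ht u) (hΩ.1 u)).image idx)
    calc idx u ≤ sSup (idx '' {v : T | ht v ≤ ht u}) := le_csSup hb ⟨u, by exact le_refl (ht u), rfl⟩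
      _ < sSup (idx '' {v : T | ht v ≤ ht u}) + 1 := by
          rw [Ordinal.add_one_eq_succ]; exact Order.lt_succ _
      _ = g (ht u) := rfl
  set img : Set Ordinal.{0} → Set T :=
    fun A => e '' {ξ : (Set.Iio omega1.{0} : Set Ordinal) | ξ.1 ∈ A} with himg
  refine ⟨fun t => (fun A => img A ∩ Set.Iio t) '' Ds (ht t), fun t => ⟨?_, ?_⟩, ?_⟩
  · rintro A ⟨A', -, rfl⟩; exact Set.inter_subset_right
  · exact ((hDs (ht t) (hΩ.1 t)).2).image _
  intro X
  set X' : Set Ordinal.{0} := {o : Ordinal.{0} | ∃ h : o ∈ Set.Iio omega1.{0}, e ⟨o, h⟩ ∈ X}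
    with hX'
  have hX'sub : X' ⊆ Set.Iio omega1 := fun o ho => ho.choose
  obtain ⟨C, hC, hCg⟩ := hguess X' hX'sub
  obtain ⟨D, hDC, hDlt, hDcl, hDunb, hDclosed⟩ := club_refine C hC g hg_lt
  have hgood : ∀ t : T, ht t ∈ D →
      X ∩ Set.Iio t ∈ (fun A => img A ∩ Set.Iio t) '' Ds (ht t) := by
    intro t htD
    refine ⟨X' ∩ Set.Iio (ht t), hCg (ht t) (hDC htD), ?_⟩
    ext u
    simp only [Set.mem_inter_iff, Set.mem_Iio]
    constructor
    · rintro ⟨⟨ξ, hξ, rfl⟩, hut⟩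
      obtain ⟨h, hX⟩ := hξ.1
      refine ⟨?_, hut⟩
      have : (⟨ξ.1, h⟩ : (Set.Iio omega1.{0} : Set Ordinal)) = ξ := Subtype.ext rfl
      rwa [this] at hX
    · rintro ⟨huX, hut⟩
      refine ⟨⟨e.symm u, ⟨⟨(e.symm u).2, ?_⟩, ?_⟩, e.apply_symm_apply u⟩, hut⟩
      · show e ⟨(e.symm u).1, (e.symm u).2⟩ ∈ X
        have : (⟨(e.symm u).1, (e.symm u).2⟩ : (Set.Iio omega1.{0} : Set Ordinal)) = e.symm u :=
          Subtype.ext rfl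
        rw [this, e.apply_symm_apply]
        exact huX
      · exact lt_trans (hg_idx u) (hDcl (ht t) htD (ht u) (hht.1 u t hut))
  set B := {t : T | X ∩ Set.Iio t ∉ (fun A => img A ∩ Set.Iio t) '' Ds (ht t)} with hB
  have hbadD : ∀ t : T, t ∈ B → ht t ∉ D := fun t htB hD => htB (hgood t hD)
  obtain ⟨d0, hd0D, -⟩ := hDunb 0 omega1_pos
  set c : T → Ordinal.{0} := fun t => sSup (D ∩ Set.Iio (ht t)) with hc
  set f : T → T := fun t =>
    if h : (D ∩ Set.Iio (ht t)).Nonempty ∧ c t < ht t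
    then (hht.2 t (c t) h.2).choose else ⊥ with hf
  refine ⟨f, ?_, ?_⟩
  · intro t _ htne
    by_cases h : (D ∩ Set.Iio (ht t)).Nonempty ∧ c t < ht t
    · have hft : f t = (hht.2 t (c t) h.2).choose := by
        simp only [hf]; rw [dif_pos h]
      rw [hft]
      exact (hht.2 t (c t) h.2).choose_spec.1
    · have hft : f t = ⊥ := by simp only [hf]; rw [dif_neg h]
      rw [hft]
      exact Ne.bot_lt htne
  · intro s
    have hnext : {x : Ordinal.{0} | x ∈ D ∧ ht s < x}.Nonempty := by
      obtain ⟨x, hxD, hx⟩ := hDunb (ht s) (hΩ.1 s)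
      exact ⟨x, hxD, hx⟩
    set nxt := sInf {x : Ordinal.{0} | x ∈ D ∧ ht s < x} with hnxt
    have hnxt_mem : nxt ∈ D ∧ ht s < nxt := csInf_mem hnext
    set M := max nxt d0 with hM
    have hMlt : M < omega1 := max_lt (hDlt hnxt_mem.1) (hDlt hd0D)
    have hsub : {u : T | u ∈ B ∧ f u = s} ⊆ {u : T | ht u ≤ M} := by
      rintro u ⟨huB, hfu⟩
      by_cases h : (D ∩ Set.Iio (ht u)).Nonempty ∧ c u < ht u
      · have hfu' : (hht.2 u (c u) h.2).choose = s := by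
          rw [← hfu]; simp only [hf]; rw [dif_pos h]
        have hcs : ht s = c u := by
          rw [← hfu']; exact (hht.2 u (c u) h.2).choose_spec.2
        have hle : ht u ≤ nxt := by
          by_contra hgt
          push_neg at hgt
          have hmem : nxt ∈ D ∩ Set.Iio (ht u) := ⟨hnxt_mem.1, hgt⟩
          have hle2 : nxt ≤ c u := le_csSup ⟨ht u, fun x hx => le_of_lt hx.2⟩ hmem
          rw [← hcs] at hle2
          exact absurd hle2 (not_le.2 hnxt_mem.2)
        exact le_trans hle (le_max_left _ _)
      · rcases Set.eq_empty_or_nonempty (D ∩ Set.Iio (ht u)) with hemp | hne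
        · have hle : ht u ≤ d0 := by
            by_contra hgt
            push_neg at hgt
            exact Set.eq_empty_iff_forall_notMem.1 hemp d0 ⟨hd0D, hgt⟩
          exact le_trans hle (le_max_right _ _)
        · have hle : c u ≤ ht u := csSup_le hne (fun x hx => le_of_lt hx.2)
          have hnlt : ¬ c u < ht u := fun hlt => h ⟨hne, hlt⟩
          have heq : sSup (D ∩ Set.Iio (ht u)) = ht u := le_antisymm hle (not_lt.1 hnlt)
          exact absurd (hDclosed (ht u) (hΩ.1 u) hne heq) (hbadD u huB)
    exact countable_isSpecial' ((hlevle M hMlt).mono hsub)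


universe uT uO in
lemma lower_height {T : Type uT} [PartialOrder T] (ht : T → Ordinal.{uO})
    (hht : IsHeightFun ht) (hΩ : HeightOmega1 ht) (hlev : CountableLevels ht) :
    ∃ ht0 : T → Ordinal.{0}, IsHeightFun ht0 ∧ HeightOmega1 ht0 ∧ CountableLevels ht0 := by
  classical
  have homega : omega1.{uO} = Ordinal.lift.{uO, 0} omega1.{0} := by
    rw [show omega1.{0} = Ordinal.omega 1 from rfl, Ordinal.lift_omega, Ordinal.lift_one]
    rfl
  have key : ∀ t : T, ∃ a : Ordinal.{0}, Ordinal.lift.{uO, 0} a = ht t := by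
    intro t
    obtain ⟨a, -, ha⟩ := Ordinal.lt_lift_iff.1 (homega ▸ hΩ.1 t)
    exact ⟨a, ha⟩
  choose ht0 hht0 using key
  refine ⟨ht0, ⟨?_, ?_⟩, ⟨?_, ?_⟩, ?_⟩
  · intro a b hab
    have := hht.1 a b hab
    rwa [← hht0 a, ← hht0 b, Ordinal.lift_lt] at this
  · intro t o ho
    have ho' : Ordinal.lift.{uO, 0} o < ht t := by
      rw [← hht0 t]
      exact Ordinal.lift_lt.2 ho
    obtain ⟨u, hut, hu⟩ := hht.2 t _ ho'
    exact ⟨u, hut, Ordinal.lift_inj.1 (by rw [hht0 u, hu])⟩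
  · intro t
    have := hΩ.1 t
    rwa [← hht0 t, homega, Ordinal.lift_lt] at this
  · intro o ho
    have ho' : Ordinal.lift.{uO, 0} o < omega1 := by
      rw [homega, Ordinal.lift_lt]; exact ho
    obtain ⟨t, htt⟩ := hΩ.2 _ ho'
    exact ⟨t, Ordinal.lift_inj.1 (by rw [hht0 t, htt])⟩
  · intro o
    have hset : {t : T | ht0 t = o} = {t : T | ht t = Ordinal.lift.{uO, 0} o} := by
      ext t
      simp only [Set.mem_setOf_eq]
      exact ⟨fun h => by rw [← hht0 t, h], fun h => Ordinal.lift_inj.1 (by rw [hht0 t, h])⟩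
    rw [hset]
    exact hlev _

/-- If `T` is a nonspecial `ω₁`-tree, then `◊*` implies `◊_T*`. -/
theorem stmt14 {T : Type*} [PartialOrder T] [OrderBot T]
    (hchain : PredsChain T) (ht : T → Ordinal)
    (hht : IsHeightFun ht) (hΩ : HeightOmega1 ht) (hlev : CountableLevels ht)
    (hns : ¬ IsSpecialSet (Set.univ : Set T))
    (hstar : DiamondStar) :
    DiamondTreeStar T := by
  obtain ⟨ht0, h1, h2, h3⟩ := lower_height ht hht hΩ hlev
  exact stmt14_aux ht0 h1 h2 h3 hstar
end

section
/- Let T be an ω₁-tree and let S ⊆ ω₁ be stationary. Then T is S-st-special if and only if T↾S ∈ NS^T. -/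
open Set

/-- `T` is `S`-st-special: there is a function defined on the nodes of nonzero height
belonging to a level in `S`, taking values `f t ∈ ht t × ω` and injective on chains. -/
def SStSpecial {T : Type*} [PartialOrder T] (ht : T → Ordinal) (S : Set Ordinal) : Prop :=
  ∃ f : T → Ordinal × ℕ,
    (∀ t : T, ht t ∈ S → ht t ≠ 0 → (f t).1 < ht t) ∧
    ∀ s t : T, s < t → ht s ∈ S → ht s ≠ 0 → ht t ∈ S → ht t ≠ 0 → f s ≠ f t

/-- Let `T` be an `ω₁`-tree and let `S ⊆ ω₁` be stationary. Then `T` is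
`S`-st-special if and only if `T ↾ S ∈ NS^T`. -/
theorem stmt19 {T : Type*} [PartialOrder T] [OrderBot T]
    (hchain : PredsChain T) (ht : T → Ordinal)
    (hht : IsHeightFun ht) (hΩ : HeightOmega1 ht) (hlev : CountableLevels ht)
    (S : Set Ordinal) (hSsub : S ⊆ Set.Iio omega1) (hSstat : IsStationaryIn S) :
    SStSpecial ht S ↔ InNS {t : T | ht t ∈ S} := by
  classical
  have htbot : ht (⊥ : T) = 0 := by
    by_contra h
    obtain ⟨s, hs, -⟩ := hht.2 ⊥ 0 (pos_iff_ne_zero.2 h)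
    exact absurd (lt_of_lt_of_le hs bot_le) (lt_irrefl s)
  have hbot : ∀ t : T, ht t = 0 → t = ⊥ := by
    intro t h0
    by_contra hne
    have : (⊥ : T) < t := bot_le.lt_of_ne (Ne.symm hne)
    have := hht.1 ⊥ t this
    rw [htbot, h0] at this
    exact absurd this (lt_irrefl (0 : Ordinal))
  constructor
  · rintro ⟨f, hf1, hf2⟩
    set g : T → T := fun t =>
      if h : ht t ∈ S ∧ ht t ≠ 0 then
        Classical.choose (hht.2 t (f t).1 (hf1 t h.1 h.2)) else ⊥ with hg
    have hgspec : ∀ t : T, (h : ht t ∈ S ∧ ht t ≠ 0) →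
        g t < t ∧ ht (g t) = (f t).1 := by
      intro t h
      have := Classical.choose_spec (hht.2 t (f t).1 (hf1 t h.1 h.2))
      simpa [hg, dif_pos h] using this
    refine ⟨g, ?_, ?_⟩
    · intro t htS htne
      have h0 : ht t ≠ 0 := fun h0 => htne (hbot t h0)
      exact (hgspec t ⟨htS, h0⟩).1
    · intro t
      refine ⟨fun n => Nat.rec {⊥}
        (fun n _ => {s : T | ht s ∈ S ∧ ht s ≠ 0 ∧ g s = t ∧ (f s).2 = n}) n,
        ?_, ?_⟩
      · intro n
        cases n with
        | zero => exact Set.Subsingleton.isAntichain (by simp) _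
        | succ n =>
          intro a ha b hb hab hle
          obtain ⟨haS, ha0, hga, hfa⟩ := ha
          obtain ⟨hbS, hb0, hgb, hfb⟩ := hb
          have hlt : a < b := lt_of_le_of_ne hle hab
          apply hf2 a b hlt haS ha0 hbS hb0
          have h1 : (f a).1 = (f b).1 := by
            have e1 := (hgspec a ⟨haS, ha0⟩).2
            have e2 := (hgspec b ⟨hbS, hb0⟩).2
            rw [← e1, ← e2, hga, hgb]
          exact Prod.ext h1 (hfa.trans hfb.symm)
      · rintro s ⟨hsS, hgs⟩
        by_cases h0 : ht s = 0
        · exact Set.mem_iUnion.2 ⟨0, by simp [hbot s h0]⟩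
        · exact Set.mem_iUnion.2 ⟨(f s).2 + 1, ⟨hsS, h0, hgs, rfl⟩⟩
  · rintro ⟨g, hreg, hfib⟩
    choose A hA hcov using hfib
    have hex : ∀ s : T, ht s ∈ S ∧ ht s ≠ 0 → ∃ n, s ∈ A (g s) n := by
      intro s hs
      have : s ∈ ⋃ n, A (g s) n := hcov (g s) ⟨hs.1, rfl⟩
      exact Set.mem_iUnion.1 this
    refine ⟨fun s => if h : ht s ∈ S ∧ ht s ≠ 0 then
        (ht (g s), Nat.find (hex s h)) else (0, 0), ?_, ?_⟩
    · intro t htS ht0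
      have hne : t ≠ ⊥ := fun h => ht0 (h ▸ htbot)
      have hlt : g t < t := hreg t htS hne
      simpa [dif_pos (⟨htS, ht0⟩ : ht t ∈ S ∧ ht t ≠ 0)] using hht.1 _ _ hlt
    · intro s t hst hsS hs0 htS ht0 heq
      have hs' : ht s ∈ S ∧ ht s ≠ 0 := ⟨hsS, hs0⟩
      have ht' : ht t ∈ S ∧ ht t ≠ 0 := ⟨htS, ht0⟩
      simp only [dif_pos hs', dif_pos ht'] at heq
      have h1 : ht (g s) = ht (g t) := congrArg Prod.fst heq
      have hgs : g s < t := lt_trans (hreg s hsS (fun h => hs0 (h ▸ htbot))) hst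
      have hgt : g t < t := hreg t htS (fun h => ht0 (h ▸ htbot))
      have hgg : g s = g t := by
        rcases eq_or_ne (g s) (g t) with h | h
        · exact h
        · rcases hchain t hgs hgt h with hle | hle
          · exact absurd (hht.1 _ _ (hle.lt_of_ne h)) (by rw [h1]; exact lt_irrefl _)
          · exact absurd (hht.1 _ _ (hle.lt_of_ne h.symm)) (by rw [h1]; exact lt_irrefl _)
      have h2 : Nat.find (hex s hs') = Nat.find (hex t ht') := congrArg Prod.snd heq
      have hsmem : s ∈ A (g s) (Nat.find (hex s hs')) := Nat.find_spec (hex s hs')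
      have htmem : t ∈ A (g s) (Nat.find (hex s hs')) := by
        have hspec := Nat.find_spec (hex t ht')
        rw [h2, hgg]
        exact hspec
      exact hA (g s) (Nat.find (hex s hs')) hsmem htmem (ne_of_lt hst) hst.le
end
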